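/- For real numbers $t$ and $a$ with $|t| < a$ and any real $u$, the function $e^t(1 - t/a)^u$ equals $\sum_{k=0}^{\infty} C_k^{(a)}(u) \frac{t^k}{k!}$, where $C_k^{(a)}(u) = \sum_{r=0}^{k} \binom{k}{r} (-u)_r (1/a)^r$ and $(\alpha)_r$ denotes the rising factorial (Pochhammer symbol). -/

import Mathlib

/-- Charlier polynomial `C_k^{(a)}(u) = ∑_{r=0}^k (k choose r) (-u)_r (1/a)^r`,
where `(α)_r` is the rising factorial (Pochhammer symbol). -/
noncomputable def charlier (a u : ℝ) (k : ℕ) : ℝ :=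
  ∑ r ∈ Finset.range (k + 1),
    (k.choose r : ℝ) * (ascPochhammer ℝ r).eval (-u) * (1 / a) ^ r

namespace CharlierAux

/-- The binomial series coefficient `(-u)_r / r!`. -/
noncomputable def d (u : ℝ) (r : ℕ) : ℝ :=
  (ascPochhammer ℝ r).eval (-u) / r.factorial

lemma d_zero (u : ℝ) : d u 0 = 1 := by simp [d]

lemma d_succ (u : ℝ) (r : ℕ) : d u (r + 1) * ((r : ℝ) + 1) = ((r : ℝ) - u) * d u r := by
  have h1 : ((r.factorial : ℝ)) ≠ 0 := Nat.cast_ne_zero.mpr r.factorial_ne_zero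
  have h2 : ((r : ℝ) + 1) ≠ 0 := by positivity
  simp only [d, ascPochhammer_succ_right, Polynomial.eval_mul, Polynomial.eval_add,
    Polynomial.eval_X, Polynomial.eval_natCast, Nat.factorial_succ, Nat.cast_mul,
    Nat.cast_add, Nat.cast_one]
  field_simp
  ring

lemma abs_d_le (u : ℝ) (r : ℕ) :
    |d u r| ≤ ((r + ⌈|u|⌉₊).descFactorial ⌈|u|⌉₊ : ℝ) := by
  set m := ⌈|u|⌉₊ with hm
  induction r with
  | zero =>
    simp only [d_zero, abs_one, Nat.zero_add, Nat.descFactorial_self]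
    exact_mod_cast Nat.one_le_iff_ne_zero.mpr m.factorial_ne_zero
  | succ r ih =>
    have hpos : (0 : ℝ) < (r : ℝ) + 1 := by positivity
    have habs : |d u (r + 1)| * ((r : ℝ) + 1) = |(r : ℝ) - u| * |d u r| := by
      rw [← abs_of_pos hpos, ← abs_mul, d_succ, abs_mul]
    have hru : |(r : ℝ) - u| ≤ (r : ℝ) + m + 1 := by
      have h1 : |u| ≤ (m : ℝ) := Nat.le_ceil _
      have h2 := abs_add_le (r : ℝ) (-u)
      rw [abs_neg] at h2
      rw [sub_eq_add_neg]
      have h3 : |(r : ℝ)| = (r : ℝ) := abs_of_nonneg (by positivity)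
      linarith
    have hid : (r + 1) * ((r + 1 + m).descFactorial m) =
        (r + m + 1) * ((r + m).descFactorial m) := by
      have h1 : (r + m + 1).descFactorial (m + 1) = (r + m + 1) * (r + m).descFactorial m :=
        Nat.succ_descFactorial_succ (r + m) m
      have h2 : (r + m + 1).descFactorial (m + 1) = (r + 1) * (r + m + 1).descFactorial m := by
        rw [Nat.descFactorial_succ]; congr 1; omega
      rw [show r + 1 + m = r + m + 1 by omega]
      exact h2.symm.trans h1
    have hidR : ((r : ℝ) + 1) * ((r + 1 + m).descFactorial m : ℝ) =
        ((r : ℝ) + m + 1) * ((r + m).descFactorial m : ℝ) := by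
      have := congrArg (fun n : ℕ => (n : ℝ)) hid
      push_cast at this
      push_cast
      linarith [this]
    have hmain : |d u (r + 1)| * ((r : ℝ) + 1) ≤
        ((r : ℝ) + m + 1) * ((r + m).descFactorial m : ℝ) := by
      rw [habs]
      exact mul_le_mul hru ih (abs_nonneg _) (by positivity)
    have : |d u (r + 1)| * ((r : ℝ) + 1) ≤ ((r + 1 + m).descFactorial m : ℝ) * ((r : ℝ) + 1) := by
      rw [mul_comm (((r + 1 + m).descFactorial m : ℝ))]
      calc |d u (r + 1)| * ((r : ℝ) + 1) ≤
          ((r : ℝ) + m + 1) * ((r + m).descFactorial m : ℝ) := hmain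
        _ = ((r : ℝ) + 1) * ((r + 1 + m).descFactorial m : ℝ) := hidR.symm
    exact le_of_mul_le_mul_right this hpos

/-- Weighted bound: `n * |d u n| ≤ (n + (m+1)).descFactorial (m+1)`. -/
lemma abs_nd_le (u : ℝ) (n : ℕ) :
    (n : ℝ) * |d u n| ≤ ((n + (⌈|u|⌉₊ + 1)).descFactorial (⌈|u|⌉₊ + 1) : ℝ) := by
  set m := ⌈|u|⌉₊ with hm
  have h1 : (n + (m + 1)).descFactorial (m + 1) = (n + m + 1) * (n + m).descFactorial m := by
    rw [show n + (m + 1) = (n + m) + 1 by omega]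
    exact Nat.succ_descFactorial_succ (n + m) m
  calc (n : ℝ) * |d u n| ≤ (n : ℝ) * ((n + m).descFactorial m : ℝ) := by
        exact mul_le_mul_of_nonneg_left (abs_d_le u n) (by positivity)
    _ ≤ ((n : ℝ) + m + 1) * ((n + m).descFactorial m : ℝ) := by
        apply mul_le_mul_of_nonneg_right _ (by positivity)
        linarith [Nat.cast_nonneg (α := ℝ) m]
    _ = ((n + (m + 1)).descFactorial (m + 1) : ℝ) := by
        rw [h1]; push_cast; ring

lemma summable_descF {ρ : ℝ} (k : ℕ) (hρ : |ρ| < 1) :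
    Summable fun n : ℕ => ((n + k).descFactorial k : ℝ) * ρ ^ n :=
  summable_descFactorial_mul_geometric_of_norm_lt_one k (by rwa [Real.norm_eq_abs])

lemma summable_d_mul (u : ℝ) {x : ℝ} (hx : |x| < 1) :
    Summable fun r : ℕ => d u r * x ^ r := by
  set m := ⌈|u|⌉₊
  apply Summable.of_norm_bounded (summable_descF m (by rwa [abs_abs]))
  intro r
  rw [Real.norm_eq_abs, abs_mul, abs_pow]
  exact mul_le_mul_of_nonneg_right (abs_d_le u r) (by positivity)

lemma summable_nd_mul (u : ℝ) {x : ℝ} (hx : |x| < 1) :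
    Summable fun n : ℕ => (n : ℝ) * d u n * x ^ n := by
  set m := ⌈|u|⌉₊
  apply Summable.of_norm_bounded (summable_descF (m + 1) (by rwa [abs_abs]))
  intro n
  rw [Real.norm_eq_abs, abs_mul, abs_pow, abs_mul, Nat.abs_cast]
  exact mul_le_mul_of_nonneg_right (abs_nd_le u n) (by positivity)

/-- Derivative-term bound on a ball of radius `ρ`. -/
lemma deriv_term_bound (u : ℝ) {ρ y : ℝ} (hρ0 : 0 < ρ) (hy : |y| ≤ ρ) (n : ℕ) :
    ‖d u n * ((n : ℝ) * y ^ (n - 1))‖ ≤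
      (1 / ρ) * (((n + (⌈|u|⌉₊ + 1)).descFactorial (⌈|u|⌉₊ + 1) : ℝ) * ρ ^ n) := by
  set m := ⌈|u|⌉₊
  match n with
  | 0 => simp; positivity
  | (r + 1) =>
    have h1 : ‖d u (r + 1) * (((r : ℝ) + 1) * y ^ r)‖ =
        ((r : ℝ) + 1) * |d u (r + 1)| * |y| ^ r := by
      rw [Real.norm_eq_abs, abs_mul, abs_mul, abs_pow,
        abs_of_nonneg (show (0:ℝ) ≤ (r:ℝ) + 1 by positivity)]
      ring
    have h2 : ((r : ℝ) + 1) * |d u (r + 1)| ≤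
        (((r + 1) + (m + 1)).descFactorial (m + 1) : ℝ) := by
      have := abs_nd_le u (r + 1)
      push_cast at this ⊢
      linarith
    have h3 : |y| ^ r ≤ ρ ^ r := pow_le_pow_left₀ (abs_nonneg y) hy r
    have key : ‖d u (r + 1) * (((r : ℝ) + 1) * y ^ r)‖ ≤
        (((r + 1) + (m + 1)).descFactorial (m + 1) : ℝ) * ρ ^ r := by
      rw [h1]
      exact mul_le_mul h2 h3 (by positivity) (by positivity)
    have hrw : (1 / ρ) * ((((r + 1) + (m + 1)).descFactorial (m + 1) : ℝ) * ρ ^ (r + 1)) =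
        (((r + 1) + (m + 1)).descFactorial (m + 1) : ℝ) * ρ ^ r := by
      field_simp
      ring
    simp only [Nat.add_sub_cancel] at *
    rw [hrw]
    convert key using 3
    push_cast; ring

/-- The binomial series function. -/
noncomputable def F (u : ℝ) (x : ℝ) : ℝ := ∑' r : ℕ, d u r * x ^ r

lemma summable_deriv_term (u : ℝ) {x : ℝ} (hx : |x| < 1) :
    Summable fun n : ℕ => d u n * ((n : ℝ) * x ^ (n - 1)) := by
  set ρ := (|x| + 1) / 2 with hρ
  have hρ0 : 0 < ρ := by positivity
  have hρ1 : |ρ| < 1 := by rw [abs_of_pos hρ0]; simp only [hρ]; linarith [abs_nonneg x]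
  apply Summable.of_norm_bounded (((summable_descF (⌈|u|⌉₊ + 1) hρ1)).mul_left (1 / ρ))
  exact deriv_term_bound u hρ0 (by simp only [hρ]; linarith) 

lemma hasDerivAt_F (u : ℝ) {x : ℝ} (hx : |x| < 1) :
    HasDerivAt (F u) (∑' n : ℕ, d u n * ((n : ℝ) * x ^ (n - 1))) x := by
  set ρ := (|x| + 1) / 2 with hρ
  have hρ0 : 0 < ρ := by positivity
  have hρ1 : |ρ| < 1 := by rw [abs_of_pos hρ0]; simp only [hρ]; linarith [abs_nonneg x]
  have hxρ : |x| < ρ := by simp only [hρ]; linarith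
  exact hasDerivAt_tsum_of_isPreconnected (y₀ := (0:ℝ))
    (((summable_descF (⌈|u|⌉₊ + 1) hρ1)).mul_left (1 / ρ))
    isOpen_Ioo (isPreconnected_Ioo (a := -ρ) (b := ρ))
    (fun n y _ => (hasDerivAt_pow n y).const_mul (d u n))
    (fun n y hy => deriv_term_bound u hρ0
      (by rw [Set.mem_Ioo] at hy; rw [abs_le]; constructor <;> linarith [hy.1, hy.2]) n)
    (Set.mem_Ioo.mpr ⟨by linarith, by linarith⟩)
    (summable_d_mul u (show |(0:ℝ)| < 1 by simp))
    (Set.mem_Ioo.mpr (abs_lt.mp hxρ))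

lemma deriv_series_eq (u : ℝ) {x : ℝ} (hx : |x| < 1) :
    (∑' n : ℕ, d u n * ((n : ℝ) * x ^ (n - 1))) =
      ∑' r : ℕ, ((r : ℝ) - u) * d u r * x ^ r := by
  rw [Summable.tsum_eq_zero_add (summable_deriv_term u hx)]
  simp only [Nat.cast_zero, zero_mul, mul_zero, zero_add, Nat.add_sub_cancel]
  apply tsum_congr
  intro r
  push_cast
  rw [← mul_assoc, d_succ]

lemma ode (u : ℝ) {x : ℝ} (hx : |x| < 1) :
    (1 - x) * (∑' n : ℕ, d u n * ((n : ℝ) * x ^ (n - 1))) = -u * F u x := by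
  have SB : Summable fun n : ℕ => (n : ℝ) * d u n * x ^ n := summable_nd_mul u hx
  have SC : Summable fun r : ℕ => u * (d u r * x ^ r) := (summable_d_mul u hx).mul_left u
  have SA : Summable fun r : ℕ => ((r : ℝ) - u) * d u r * x ^ r := by
    apply Summable.congr (SB.sub SC)
    intro r; ring
  have hx_mul : x * (∑' n : ℕ, d u n * ((n : ℝ) * x ^ (n - 1))) =
      ∑' n : ℕ, (n : ℝ) * d u n * x ^ n := by
    rw [← tsum_mul_left]
    rw [Summable.tsum_eq_zero_add SB, Summable.tsum_eq_zero_add ((summable_deriv_term u hx).mul_left x)]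
    simp only [Nat.cast_zero, zero_mul, mul_zero, zero_add, Nat.add_sub_cancel]
    apply tsum_congr
    intro r
    push_cast
    rw [pow_succ]
    ring
  have hFu : u * F u x = ∑' r : ℕ, u * (d u r * x ^ r) := by
    rw [F, tsum_mul_left]
  have key : (∑' n : ℕ, d u n * ((n : ℝ) * x ^ (n - 1))) -
      x * (∑' n : ℕ, d u n * ((n : ℝ) * x ^ (n - 1))) + u * F u x = 0 := by
    rw [hx_mul, deriv_series_eq u hx, hFu, ← Summable.tsum_sub SA SB, ← Summable.tsum_add (SA.sub SB) SC]
    convert tsum_zero with r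
    ring
  linarith [key]

lemma F_zero (u : ℝ) : F u 0 = 1 := by
  rw [F, tsum_eq_single 0 (fun b hb => by simp [zero_pow hb])]
  simp [d_zero]

lemma hasDerivAt_H (u : ℝ) {y : ℝ} (hy : |y| < 1) :
    HasDerivAt (fun s => F u s * (1 - s) ^ (-u)) 0 y := by
  have hy1 : y < 1 := (abs_lt.mp hy).2
  have hpos : 0 < 1 - y := by linarith
  have h1 : HasDerivAt (fun s : ℝ => 1 - s) (-1) y := by
    simpa using (hasDerivAt_id y).const_sub 1
  have h2 : HasDerivAt (fun s : ℝ => (1 - s) ^ (-u)) (u * (1 - y) ^ (-u - 1)) y := by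
    have := (Real.hasDerivAt_rpow_const (x := 1 - y) (p := -u)
      (Or.inl hpos.ne')).comp y h1
    exact this.congr_deriv (by ring)
  have hF := hasDerivAt_F u hy
  have hprod := hF.mul h2
  refine hprod.congr_deriv ?_
  symm
  have hsplit : (1 - y) ^ (-u) = (1 - y) * (1 - y) ^ (-u - 1) := by
    have h3 := Real.rpow_add hpos 1 (-u - 1)
    rw [Real.rpow_one, show (1 : ℝ) + (-u - 1) = -u by ring] at h3
    exact h3
  rw [hsplit]
  have hode := ode u hy
  linear_combination -(((1 - y) ^ (-u - 1)) * hode)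

lemma F_eq_rpow (u : ℝ) {x : ℝ} (hx : |x| < 1) : F u x = (1 - x) ^ u := by
  have hx1 : x < 1 := (abs_lt.mp hx).2
  have hpos : 0 < 1 - x := by linarith
  set H : ℝ → ℝ := fun s => F u s * (1 - s) ^ (-u) with hH
  have habs : ∀ z ∈ Set.Icc (min x 0) (max x 0), |z| < 1 := by
    intro z hz
    rw [Set.mem_Icc] at hz
    rw [abs_lt]
    rcases abs_lt.mp hx with ⟨h1, h2⟩
    constructor
    · calc (-1 : ℝ) < min x 0 := by rcases le_total x 0 with h | h <;> simp [min_eq_left, min_eq_right, h] <;> linarith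
        _ ≤ z := hz.1
    · calc z ≤ max x 0 := hz.2
        _ < 1 := by rcases le_total x 0 with h | h <;> simp [max_eq_left, max_eq_right, h] <;> linarith
  have hconst := constant_of_has_deriv_right_zero
    (f := H) (a := min x 0) (b := max x 0)
    (fun z hz => ((hasDerivAt_H u (habs z hz)).continuousAt).continuousWithinAt)
    (fun z hz => ((hasDerivAt_H u (habs z (Set.mem_Icc.mpr ⟨(Set.mem_Ico.mp hz).1, le_of_lt (Set.mem_Ico.mp hz).2⟩))).hasDerivWithinAt))
  have hx_mem : x ∈ Set.Icc (min x 0) (max x 0) :=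
    Set.mem_Icc.mpr ⟨min_le_left _ _, le_max_left _ _⟩
  have h0_mem : (0 : ℝ) ∈ Set.Icc (min x 0) (max x 0) :=
    Set.mem_Icc.mpr ⟨min_le_right _ _, le_max_right _ _⟩
  have hH0 : H 0 = 1 := by
    simp only [hH, F_zero, sub_zero, Real.one_rpow, one_mul]
  have : H x = 1 := by
    rw [hconst x hx_mem, ← hconst 0 h0_mem, hH0]
  have hHx : F u x * (1 - x) ^ (-u) = 1 := this
  have hcancel : (1 - x) ^ (-u) * (1 - x) ^ u = 1 := by
    rw [← Real.rpow_add hpos]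
    simp
  calc F u x = F u x * ((1 - x) ^ (-u) * (1 - x) ^ u) := by rw [hcancel, mul_one]
    _ = (F u x * (1 - x) ^ (-u)) * (1 - x) ^ u := by ring
    _ = (1 - x) ^ u := by rw [hHx, one_mul]

lemma binom_hasSum (u : ℝ) {x : ℝ} (hx : |x| < 1) :
    HasSum (fun r : ℕ => d u r * x ^ r) ((1 - x) ^ u) := by
  rw [← F_eq_rpow u hx]
  exact (summable_d_mul u hx).hasSum

end CharlierAux

open CharlierAux

/-- Generating function of the Charlier polynomials:
`e^t (1 - t/a)^u = ∑_{k=0}^∞ C_k^{(a)}(u) t^k / k!` for `|t| < a`. -/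
theorem charlier_generating_function (t a u : ℝ) (ht : |t| < a) :
    Real.exp t * (1 - t / a) ^ u =
      ∑' k : ℕ, charlier a u k * t ^ k / (Nat.factorial k : ℝ) := by
  have ha : 0 < a := lt_of_le_of_lt (abs_nonneg t) ht
  set s := t / a with hs
  have hs1 : |s| < 1 := by
    rw [hs, abs_div, abs_of_pos ha, div_lt_one ha]
    exact ht
  set f : ℕ → ℝ := fun k => t ^ k / k.factorial with hf
  set g : ℕ → ℝ := fun r => d u r * s ^ r with hg
  have hfn : Summable fun k => ‖f k‖ := by
    apply Summable.congr (Real.summable_pow_div_factorial |t|)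
    intro k
    rw [hf]
    simp [Real.norm_eq_abs, abs_div, abs_pow, Nat.abs_cast]
  have hgn : Summable fun r => ‖g r‖ := by
    apply Summable.of_nonneg_of_le (fun r => norm_nonneg _)
      (fun r => ?_) (summable_descF ⌈|u|⌉₊ (by rwa [abs_abs]))
    rw [hg, Real.norm_eq_abs, abs_mul, abs_pow]
    exact mul_le_mul_of_nonneg_right (abs_d_le u r) (by positivity)
  have hexp : Real.exp t = ∑' k, f k := by
    rw [Real.exp_eq_exp_ℝ, NormedSpace.exp_eq_tsum_div]
  have hbin : (1 - s) ^ u = ∑' r, g r := (binom_hasSum u hs1).tsum_eq.symm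
  rw [hexp, hbin, tsum_mul_tsum_eq_tsum_sum_range_of_summable_norm hfn hgn]
  apply tsum_congr
  intro k
  rw [← Finset.sum_range_reflect]
  rw [charlier, Finset.sum_mul, Finset.sum_div]
  apply Finset.sum_congr rfl
  intro j hj
  have hjk : j ≤ k := Nat.lt_succ_iff.mp (Finset.mem_range.mp hj)
  have hkj : k - (k - j) = j := by omega
  simp only [Nat.add_sub_cancel]
  rw [hkj]
  simp only [hf, hg, d, hs]
  have hpow : t ^ (k - j) * t ^ j = t ^ k := by rw [← pow_add]; congr 1; omega
  have hfac : ((k.choose j : ℕ) : ℝ) * (j.factorial : ℝ) * ((k - j).factorial : ℝ)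
      = (k.factorial : ℝ) := by
    exact_mod_cast congrArg (fun n : ℕ => (n : ℝ)) (Nat.choose_mul_factorial_mul_factorial hjk)
  have hfj : ((j.factorial : ℝ)) ≠ 0 := Nat.cast_ne_zero.mpr j.factorial_ne_zero
  have hfkj : (((k - j).factorial : ℝ)) ≠ 0 := Nat.cast_ne_zero.mpr (k - j).factorial_ne_zero
  have hfk : ((k.factorial : ℝ)) ≠ 0 := Nat.cast_ne_zero.mpr k.factorial_ne_zero
  have ha0 : a ≠ 0 := ha.ne'
  have ha' : (a : ℝ) ^ j ≠ 0 := pow_ne_zero _ ha0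
  rw [div_pow, div_pow, one_pow]
  field_simp
  linear_combination (Polynomial.eval (-u) (ascPochhammer ℝ j)) * (k.factorial : ℝ) * hpow
    - t ^ k * (Polynomial.eval (-u) (ascPochhammer ℝ j)) * hfac
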